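/- arXiv:1803.04896 — 3 statements merged into one kernel-verified Lean document; each statement's English description precedes it below -/
import Mathlib

section
/- Let α₁, α₂, β₁, β₂, γ > 0, let A be the symmetric 3×3 matrix with rows (1+α₁, 0, β₁), (0, 1+α₂, β₂), (β₁, β₂, −γ), and let B = diag((1+α₁)⁻¹, (1+α₂)⁻¹, s) where s = (γ + β₁² + β₂²)⁻¹ + (γ + β₁²/α₁ + β₂²/α₂)⁻¹. Then B is symmetric positive definite and BA is invertible. -/
theorem stmt_2 (α₁ α₂ β₁ β₂ γ : ℝ)
    (hα₁ : 0 < α₁) (hα₂ : 0 < α₂) (hβ₁ : 0 < β₁) (hβ₂ : 0 < β₂) (hγ : 0 < γ)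
    (A B : Matrix (Fin 3) (Fin 3) ℝ)
    (hA : A = !![1 + α₁, 0, β₁; 0, 1 + α₂, β₂; β₁, β₂, -γ])
    (s : ℝ)
    (hs : s = (γ + β₁ ^ 2 + β₂ ^ 2)⁻¹ + (γ + β₁ ^ 2 / α₁ + β₂ ^ 2 / α₂)⁻¹)
    (hB : B = Matrix.diagonal ![(1 + α₁)⁻¹, (1 + α₂)⁻¹, s]) :
    B.PosDef ∧ IsUnit (B * A).det := by
  have h1 : (0:ℝ) < 1 + α₁ := by linarith
  have h2 : (0:ℝ) < 1 + α₂ := by linarith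
  have hspos : 0 < s := by
    rw [hs]
    have : 0 < γ + β₁ ^ 2 + β₂ ^ 2 := by positivity
    have : 0 < γ + β₁ ^ 2 / α₁ + β₂ ^ 2 / α₂ := by positivity
    positivity
  constructor
  · rw [hB]
    rw [Matrix.posDef_diagonal_iff]
    intro i
    fin_cases i <;> simp [hspos, h1, h2]
  · rw [Matrix.det_mul, hA, hB]
    apply IsUnit.mul
    · simp only [Matrix.det_diagonal]
      rw [isUnit_iff_ne_zero]
      have : ∏ i, (![(1 + α₁)⁻¹, (1 + α₂)⁻¹, s]) i = (1+α₁)⁻¹ * ((1+α₂)⁻¹ * s) := by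
        simp [Fin.prod_univ_three]; ring
      rw [this]
      positivity
    · rw [isUnit_iff_ne_zero, Matrix.det_fin_three]
      norm_num [Matrix.cons_val_zero, Matrix.cons_val_one, Matrix.cons_val_two, Matrix.vecHead, Matrix.vecTail]
      nlinarith [sq_nonneg β₁, sq_nonneg β₂, mul_pos h1 h2, mul_pos (mul_pos h1 h2) hγ, sq_nonneg (β₁*β₂)]
end

section
/- Let α₁, α₂, β₁, β₂, γ > 0, A the symmetric 3×3 matrix with rows (1+α₁, 0, β₁), (0, 1+α₂, β₂), (β₁, β₂, −γ), and B = diag((1+α₁)⁻¹, (1+α₂)⁻¹, S⁻¹) with S = γ + β₁²/(1+α₁) + β₂²/(1+α₂) (the exact Schur complement). Then the preconditioned matrix B A, which is similar to the symmetric matrix B^{1/2} A B^{1/2}, has eigenvalues contained in [−1, −(√5−1)/2] ∪ [1, (1+√5)/2], independent of all parameters. -/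
private lemma stmt13_aux_pos (t μ : ℝ) (ht0 : 0 ≤ t) (ht1 : t ≤ 1)
    (hq : μ ^ 2 = t * μ + 1) (hμ0 : 0 ≤ μ) :
    1 ≤ μ ∧ μ ≤ (1 + Real.sqrt 5) / 2 := by
  have hr : Real.sqrt 5 ^ 2 = 5 := Real.sq_sqrt (by norm_num)
  have hr2 : 2 ≤ Real.sqrt 5 := by nlinarith [Real.sqrt_nonneg 5]
  constructor
  · nlinarith [mul_nonneg ht0 hμ0]
  · have hle : μ ^ 2 ≤ μ + 1 := by nlinarith [mul_nonneg (by linarith : (0:ℝ) ≤ 1 - t) hμ0]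
    nlinarith [sq_nonneg (2 * μ - 1 - Real.sqrt 5)]

private lemma stmt13_aux_neg (t μ : ℝ) (ht0 : 0 ≤ t) (ht1 : t ≤ 1)
    (hq : μ ^ 2 = t * μ + 1) (hμ0 : μ < 0) :
    -1 ≤ μ ∧ μ ≤ -((Real.sqrt 5 - 1) / 2) := by
  have hr : Real.sqrt 5 ^ 2 = 5 := Real.sq_sqrt (by norm_num)
  have hr2 : 2 ≤ Real.sqrt 5 := by nlinarith [Real.sqrt_nonneg 5]
  constructor
  · have hle : μ ^ 2 ≤ 1 := by nlinarith [mul_nonneg ht0 (by linarith : (0:ℝ) ≤ -μ)]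
    nlinarith
  · have hge : μ + 1 ≤ μ ^ 2 := by
      nlinarith [mul_nonneg (by linarith : (0:ℝ) ≤ 1 - t) (by linarith : (0:ℝ) ≤ -μ)]
    nlinarith [mul_pos (by linarith : (0:ℝ) < 1 - 2 * μ) (by linarith : (0:ℝ) < Real.sqrt 5)]

private lemma stmt13_aux_one : (1:ℝ) ≤ (1 + Real.sqrt 5) / 2 := by
  have hr : Real.sqrt 5 ^ 2 = 5 := Real.sq_sqrt (by norm_num)
  nlinarith [Real.sqrt_nonneg 5]

set_option maxHeartbeats 2000000 in
theorem stmt_13 (α₁ α₂ β₁ β₂ γ : ℝ)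
    (hα₁ : 0 < α₁) (hα₂ : 0 < α₂) (hβ₁ : 0 < β₁) (hβ₂ : 0 < β₂) (hγ : 0 < γ)
    (A B Bh : Matrix (Fin 3) (Fin 3) ℝ)
    (hA : A = !![1 + α₁, 0, β₁; 0, 1 + α₂, β₂; β₁, β₂, -γ])
    (S : ℝ) (hS : S = γ + β₁ ^ 2 / (1 + α₁) + β₂ ^ 2 / (1 + α₂))
    (hB : B = Matrix.diagonal ![(1 + α₁)⁻¹, (1 + α₂)⁻¹, S⁻¹])
    (hBh : Bh = Matrix.diagonal
      ![Real.sqrt (1 + α₁)⁻¹, Real.sqrt (1 + α₂)⁻¹, Real.sqrt S⁻¹]) :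
    B * A = Bh * (Bh * A * Bh) * Bh⁻¹ ∧
    ∃ hH : (Bh * A * Bh).IsHermitian, ∀ i,
      hH.eigenvalues i ∈
        Set.Icc (-1 : ℝ) (-((Real.sqrt 5 - 1) / 2)) ∪
        Set.Icc (1 : ℝ) ((1 + Real.sqrt 5) / 2) := by
  have h1 : (0:ℝ) < 1 + α₁ := by linarith
  have h2 : (0:ℝ) < 1 + α₂ := by linarith
  have hSpos : 0 < S := by rw [hS]; positivity
  obtain ⟨p, hpdef⟩ : ∃ x : ℝ, x = β₁ * (Real.sqrt (1 + α₁)⁻¹ * Real.sqrt S⁻¹) := ⟨_, rfl⟩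
  obtain ⟨q, hqdef⟩ : ∃ x : ℝ, x = β₂ * (Real.sqrt (1 + α₂)⁻¹ * Real.sqrt S⁻¹) := ⟨_, rfl⟩
  obtain ⟨dd, hdddef⟩ : ∃ x : ℝ, x = -(γ * S⁻¹) := ⟨_, rfl⟩
  have hs1m : Real.sqrt (1 + α₁)⁻¹ * Real.sqrt (1 + α₁)⁻¹ = (1 + α₁)⁻¹ :=
    Real.mul_self_sqrt (by positivity)
  have hs2m : Real.sqrt (1 + α₂)⁻¹ * Real.sqrt (1 + α₂)⁻¹ = (1 + α₂)⁻¹ :=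
    Real.mul_self_sqrt (by positivity)
  have hs3m : Real.sqrt S⁻¹ * Real.sqrt S⁻¹ = S⁻¹ :=
    Real.mul_self_sqrt (by positivity)
  have hs1 : ((Real.sqrt (1 + α₁))⁻¹) ^ 2 = (1 + α₁)⁻¹ := by
    rw [← Real.sqrt_inv, sq]; exact hs1m
  have hs2 : ((Real.sqrt (1 + α₂))⁻¹) ^ 2 = (1 + α₂)⁻¹ := by
    rw [← Real.sqrt_inv, sq]; exact hs2m
  have hs3 : ((Real.sqrt S)⁻¹) ^ 2 = S⁻¹ := by
    rw [← Real.sqrt_inv, sq]; exact hs3m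
  have hx1 : (1 + α₁) * (1 + α₁)⁻¹ = 1 := mul_inv_cancel₀ (ne_of_gt h1)
  have hx2 : (1 + α₂) * (1 + α₂)⁻¹ = 1 := mul_inv_cancel₀ (ne_of_gt h2)
  have hM : Bh * A * Bh = !![1, 0, p; 0, 1, q; p, q, dd] := by
    rw [hpdef, hqdef, hdddef]
    subst hA hBh
    ext i j
    fin_cases i <;> fin_cases j <;>
      simp only [Matrix.mul_apply, Fin.sum_univ_three, Matrix.diagonal_apply,
        Matrix.cons_val', Matrix.cons_val_zero, Matrix.cons_val_one, Matrix.head_cons,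
        Matrix.empty_val', Matrix.cons_val_fin_one, Matrix.head_fin_const,
        Matrix.cons_val_two, Matrix.tail_cons, Fin.ext_iff, Fin.isValue] <;>
      norm_num <;> simp -failIfUnchanged <;>
      first
        | ring1
        | linear_combination (1+α₁)*hs1 + hx1
        | linear_combination (1+α₂)*hs2 + hx2
        | linear_combination γ*hs3
        | linear_combination (-γ)*hs3
  have hBB : Bh * Bh = B := by
    subst hBh hB
    rw [Matrix.diagonal_mul_diagonal]
    have hv : (fun i => ![Real.sqrt (1 + α₁)⁻¹, Real.sqrt (1 + α₂)⁻¹, Real.sqrt S⁻¹] i *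
        ![Real.sqrt (1 + α₁)⁻¹, Real.sqrt (1 + α₂)⁻¹, Real.sqrt S⁻¹] i) =
        ![(1 + α₁)⁻¹, (1 + α₂)⁻¹, S⁻¹] := by
      funext i
      fin_cases i <;>
        simp only [Matrix.cons_val_zero, Matrix.cons_val_one,
          Matrix.head_cons, Matrix.cons_val_two, Matrix.tail_cons] <;>
        exact Real.mul_self_sqrt (by positivity)
    rw [hv]
  have hdet : IsUnit Bh.det := by
    subst hBh
    rw [Matrix.det_diagonal]
    apply IsUnit.mk0
    rw [Fin.prod_univ_three]
    simp only [Matrix.cons_val_zero, Matrix.cons_val_one, Matrix.head_cons,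
      Matrix.cons_val_two, Matrix.tail_cons]
    have e1 : (0:ℝ) < Real.sqrt (1 + α₁)⁻¹ := Real.sqrt_pos.2 (by positivity)
    have e2 : (0:ℝ) < Real.sqrt (1 + α₂)⁻¹ := Real.sqrt_pos.2 (by positivity)
    have e3 : (0:ℝ) < Real.sqrt S⁻¹ := Real.sqrt_pos.2 (by positivity)
    positivity
  have hinv : Bh * Bh⁻¹ = 1 := Matrix.mul_nonsing_inv Bh hdet
  constructor
  · have hassoc : Bh * (Bh * A * Bh) * Bh⁻¹ = (Bh * Bh) * A * (Bh * Bh⁻¹) := by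
      simp only [Matrix.mul_assoc]
    rw [hassoc, hBB, hinv, Matrix.mul_one]
  · have hH : (Bh * A * Bh).IsHermitian := by
      rw [hM]
      unfold Matrix.IsHermitian
      ext i j
      fin_cases i <;> fin_cases j <;> simp [Matrix.conjTranspose_apply]
    refine ⟨hH, fun i => ?_⟩
    -- facts about p, q, dd
    have hp2 : p ^ 2 = β₁ ^ 2 * ((1 + α₁)⁻¹ * S⁻¹) := by
      rw [hpdef]
      linear_combination (β₁^2 * (Real.sqrt S⁻¹ * Real.sqrt S⁻¹)) * hs1m +
        (β₁^2 * (1 + α₁)⁻¹) * hs3m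
    have hq2 : q ^ 2 = β₂ ^ 2 * ((1 + α₂)⁻¹ * S⁻¹) := by
      rw [hqdef]
      linear_combination (β₂^2 * (Real.sqrt S⁻¹ * Real.sqrt S⁻¹)) * hs2m +
        (β₂^2 * (1 + α₂)⁻¹) * hs3m
    have ht : p ^ 2 + q ^ 2 = 1 + dd := by
      rw [hp2, hq2, hdddef, hS]
      have hSne : γ + β₁ ^ 2 / (1 + α₁) + β₂ ^ 2 / (1 + α₂) ≠ 0 := by positivity
      field_simp
      ring
    have ht0 : 0 ≤ p ^ 2 + q ^ 2 := by positivity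
    have hdd0 : dd ≤ 0 := by
      rw [hdddef]
      have : 0 < γ * S⁻¹ := by positivity
      linarith
    have ht1 : p ^ 2 + q ^ 2 ≤ 1 := by linarith
    -- extract eigenvalue and eigenvector
    obtain ⟨μ, hμ⟩ : ∃ μ : ℝ, hH.eigenvalues i = μ := ⟨_, rfl⟩
    obtain ⟨w, hw⟩ : ∃ w : Fin 3 → ℝ, w = ⇑(hH.eigenvectorBasis i) := ⟨_, rfl⟩
    have heig : (Bh * A * Bh).mulVec w = μ • w := by
      rw [hw, ← hμ]; exact hH.mulVec_eigenvectorBasis i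
    have hwne : ∃ k, w k ≠ 0 := by
      by_contra h
      push_neg at h
      have hz : hH.eigenvectorBasis i = 0 := by
        ext k
        have hk := h k
        rw [hw] at hk
        simpa using hk
      exact (hH.eigenvectorBasis).toBasis.ne_zero i (by simpa using hz)
    rw [hμ]
    clear hw hμ
    rw [hM] at heig
    have e0 : w 0 + p * w 2 = μ * w 0 := by
      have h := congrFun heig 0
      simp only [Matrix.mulVec, dotProduct, Fin.sum_univ_three, Matrix.cons_val',
        Matrix.cons_val_zero, Matrix.cons_val_one, Matrix.head_cons, Matrix.empty_val',
        Matrix.cons_val_fin_one, Matrix.head_fin_const, Matrix.cons_val_two, Matrix.tail_cons,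
        Pi.smul_apply, smul_eq_mul] at h
      norm_num at h
      simp at h
      linarith [h]
    have e1 : w 1 + q * w 2 = μ * w 1 := by
      have h := congrFun heig 1
      simp only [Matrix.mulVec, dotProduct, Fin.sum_univ_three, Matrix.cons_val',
        Matrix.cons_val_zero, Matrix.cons_val_one, Matrix.head_cons, Matrix.empty_val',
        Matrix.cons_val_fin_one, Matrix.head_fin_const, Matrix.cons_val_two, Matrix.tail_cons,
        Pi.smul_apply, smul_eq_mul] at h
      norm_num at h
      simp at h
      linarith [h]
    have e2 : p * w 0 + q * w 1 + dd * w 2 = μ * w 2 := by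
      have h := congrFun heig 2
      simp only [Matrix.mulVec, dotProduct, Fin.sum_univ_three, Matrix.cons_val',
        Matrix.cons_val_zero, Matrix.cons_val_one, Matrix.head_cons, Matrix.empty_val',
        Matrix.cons_val_fin_one, Matrix.head_fin_const, Matrix.cons_val_two, Matrix.tail_cons,
        Pi.smul_apply, smul_eq_mul] at h
      norm_num at h
      simp at h
      linarith [h]
    rw [Set.mem_union, Set.mem_Icc, Set.mem_Icc]
    by_cases hc : w 2 = 0
    · -- eigenvalue 1
      have hμ1 : μ = 1 := by
        by_contra hne
        have ha : w 0 = 0 := by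
          have hz : (μ - 1) * w 0 = 0 := by rw [hc] at e0; linarith [e0]
          rcases mul_eq_zero.1 hz with h | h
          · exact absurd (by linarith) hne
          · exact h
        have hb : w 1 = 0 := by
          have hz : (μ - 1) * w 1 = 0 := by rw [hc] at e1; linarith [e1]
          rcases mul_eq_zero.1 hz with h | h
          · exact absurd (by linarith) hne
          · exact h
        obtain ⟨k, hk⟩ := hwne
        fin_cases k <;> simp_all
      rw [hμ1]
      exact Or.inr ⟨le_refl 1, stmt13_aux_one⟩
    · -- quadratic equation μ² = (p²+q²)μ + 1
      have hmc : ((p ^ 2 + q ^ 2) + dd * (μ - 1)) * w 2 = (μ * (μ - 1)) * w 2 := by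
        linear_combination p * e0 + q * e1 + (μ - 1) * e2
      have key : (p ^ 2 + q ^ 2) + dd * (μ - 1) = μ * (μ - 1) :=
        mul_right_cancel₀ hc hmc
      have hquad : μ ^ 2 = (p ^ 2 + q ^ 2) * μ + 1 := by
        linear_combination -key - (μ - 1) * ht
      rcases le_or_gt 0 μ with hμ0 | hμ0
      · exact Or.inr (stmt13_aux_pos (p^2+q^2) μ ht0 ht1 hquad hμ0)
      · exact Or.inl (stmt13_aux_neg (p^2+q^2) μ ht0 ht1 hquad hμ0)
end

section
/- Let V ⊂ H¹(Ω) and Q ⊂ L²(Γ) be finite-dimensional subspaces, and let the discrete eigenvalue problem be: find λ ∈ ℝ, (u, p) ∈ V × Q with (u, v)_Ω + (p, Π v)_Γ = λ(u, v)_Ω for all v ∈ V and (q, Π u)_Γ = λ h⁻¹(p, q)_Γ for all q ∈ Q, where Π : V → Q is a bounded linear map and h > 0. If M_V, M_Q denote the Gram matrices and T the coupling matrix, every eigenvalue λ of this problem is real, and λ satisfies either λ = 1 (eigenvectors with Tᵀp-component structure) or λ(λ−1) = μ·h for some generalized singular value μ ≥ 0 of the coupling; in particular all eigenvalues satisfy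 λ ∈ {1} ∪ {(1 ± √(1+4μh))/2 : μ a nonnegative eigenvalue of M_Q⁻¹ T M_V⁻¹ Tᵀ scaled appropriately}. -/
open Matrix

theorem stmt_16 (n m : ℕ) (h : ℝ) (hh : 0 < h)
    (MV : Matrix (Fin n) (Fin n) ℝ) (MQ : Matrix (Fin m) (Fin m) ℝ)
    (T : Matrix (Fin m) (Fin n) ℝ)
    (hMV : MV.PosDef) (hMQ : MQ.PosDef)
    (lam : ℝ) (u : Fin n → ℝ) (p : Fin m → ℝ)
    (hnz : u ≠ 0 ∨ p ≠ 0)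
    (heq1 : MV.mulVec u + Tᵀ.mulVec p = lam • MV.mulVec u)
    (heq2 : T.mulVec u = lam • (h⁻¹ • MQ.mulVec p)) :
    lam = 1 ∨
    ∃ μ : ℝ, 0 ≤ μ ∧
      (∃ q : Fin m → ℝ, q ≠ 0 ∧ (MQ⁻¹ * T * MV⁻¹ * Tᵀ).mulVec q = μ • q) ∧
      lam * (lam - 1) = μ * h ∧
      (lam = (1 + Real.sqrt (1 + 4 * μ * h)) / 2 ∨
       lam = (1 - Real.sqrt (1 + 4 * μ * h)) / 2) := by
  by_cases hl : lam = 1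
  · exact Or.inl hl
  right
  have hTt : Tᵀ.mulVec p = (lam - 1) • MV.mulVec u := by
    rw [sub_smul, one_smul, ← heq1]; abel
  have hMVu : IsUnit MV := hMV.isUnit
  have hMQu : IsUnit MQ := hMQ.isUnit
  have hinvV : MV⁻¹ * MV = 1 := nonsing_inv_mul MV (isUnit_iff_isUnit_det MV |>.1 hMVu)
  have hinvQ : MQ⁻¹ * MQ = 1 := nonsing_inv_mul MQ (isUnit_iff_isUnit_det MQ |>.1 hMQu)
  -- p ≠ 0
  have hp : p ≠ 0 := by
    intro hp0
    have hu0 : u ≠ 0 := by rcases hnz with hu | hpp; exact hu; exact absurd hp0 hpp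
    rw [hp0] at hTt
    simp only [mulVec_zero] at hTt
    have : MV.mulVec u = 0 := by
      rcases smul_eq_zero.1 hTt.symm with hc | hc
      · exact absurd (by linarith [sub_eq_zero.1 hc]) hl
      · exact hc
    have : u = 0 := by
      have := congrArg (MV⁻¹.mulVec ·) this
      simpa [mulVec_mulVec, hinvV] using this
    exact hu0 this
  set μ : ℝ := lam * (lam - 1) / h with hμdef
  have hμh : lam * (lam - 1) = μ * h := by rw [hμdef, div_mul_cancel₀ _ hh.ne']
  -- eigen equation
  have heig : (MQ⁻¹ * T * MV⁻¹ * Tᵀ).mulVec p = μ • p := by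
    have h1 : (MV⁻¹ * Tᵀ).mulVec p = (lam - 1) • u := by
      rw [← mulVec_mulVec, hTt, mulVec_smul, mulVec_mulVec, hinvV, one_mulVec]
    calc (MQ⁻¹ * T * MV⁻¹ * Tᵀ).mulVec p
        = (MQ⁻¹).mulVec (T.mulVec ((MV⁻¹ * Tᵀ).mulVec p)) := by
          simp [← mulVec_mulVec, Matrix.mul_assoc]
      _ = (MQ⁻¹).mulVec ((lam - 1) • (lam • (h⁻¹ • MQ.mulVec p))) := by
          rw [h1, mulVec_smul, heq2]
      _ = μ • p := by
          rw [mulVec_smul, mulVec_smul, mulVec_smul, mulVec_mulVec, hinvQ, one_mulVec,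
            smul_smul, smul_smul, hμdef]
          congr 1
          field_simp
  -- μ ≥ 0
  have hb : 0 < p ⬝ᵥ MQ.mulVec p := by
    have := hMQ.dotProduct_mulVec_pos hp
    simpa using this
  have ha : 0 ≤ u ⬝ᵥ MV.mulVec u := by
    have := hMV.posSemidef.dotProduct_mulVec_nonneg u
    simpa using this
  have hdot : p ⬝ᵥ T.mulVec u = u ⬝ᵥ Tᵀ.mulVec p := by
    rw [mulVec_transpose, dotProduct_mulVec, dotProduct_comm]
  have hkey : (lam / h) * (p ⬝ᵥ MQ.mulVec p) = (lam - 1) * (u ⬝ᵥ MV.mulVec u) := by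
    have l1 : p ⬝ᵥ T.mulVec u = (lam / h) * (p ⬝ᵥ MQ.mulVec p) := by
      rw [heq2, dotProduct_smul, dotProduct_smul, smul_eq_mul, smul_eq_mul]; ring
    have l2 : u ⬝ᵥ Tᵀ.mulVec p = (lam - 1) * (u ⬝ᵥ MV.mulVec u) := by
      rw [hTt]; simp [dotProduct_smul]
    rw [← l1, hdot, l2]
  have hμ0 : 0 ≤ μ := by
    have h2 : μ * (p ⬝ᵥ MQ.mulVec p) = (lam - 1) ^ 2 * (u ⬝ᵥ MV.mulVec u) := by
      have := congrArg (fun x => (lam - 1) * x) hkey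
      rw [hμdef]
      field_simp at this ⊢
      nlinarith [this]
    nlinarith [sq_nonneg (lam - 1), hb, ha, mul_nonneg (sq_nonneg (lam - 1)) ha]
  refine ⟨μ, hμ0, ⟨p, hp, heig⟩, hμh, ?_⟩
  -- quadratic formula
  have hdisc : 1 + 4 * μ * h = (2 * lam - 1) ^ 2 := by nlinarith [hμh]
  rcases le_or_gt (1/2 : ℝ) lam with hc | hc
  · left
    rw [hdisc, Real.sqrt_sq (by linarith)]
    ring
  · right
    have : (2 * lam - 1) ^ 2 = (1 - 2 * lam) ^ 2 := by ring
    rw [hdisc, this, Real.sqrt_sq (by linarith)]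
    ring
end
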